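/- The set S = {(h,Q,D,B) ∈ ℝ × ℝ³ × ℝ³ × ℝ³ : h ≥ √(1 + |D|² + |B|² + |Q|² + 2|D × B − Q|)} is a convex subset of ℝ^{10}. -/

import Mathlib

open Real

/-- The cross product on `ℝ³` with the Euclidean norm. -/
noncomputable def cross3 (a b : EuclideanSpace ℝ (Fin 3)) : EuclideanSpace ℝ (Fin 3) :=
  (WithLp.equiv 2 (Fin 3 → ℝ)).symm
    (crossProduct ((WithLp.equiv 2 (Fin 3 → ℝ)) a) ((WithLp.equiv 2 (Fin 3 → ℝ)) b))

section Aux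

lemma BI_esq (x : EuclideanSpace ℝ (Fin 3)) : ‖x‖^2 = x 0^2 + x 1^2 + x 2^2 := by
  rw [← real_inner_self_eq_norm_sq]
  simp only [PiLp.inner_apply, Fin.sum_univ_three, RCLike.inner_apply, conj_trivial]; ring

lemma BI_einner (x y : EuclideanSpace ℝ (Fin 3)) :
    (inner ℝ x y : ℝ) = x 0 * y 0 + x 1 * y 1 + x 2 * y 2 := by
  simp [PiLp.inner_apply, Fin.sum_univ_three]; ring

lemma BI_c0 (a b : EuclideanSpace ℝ (Fin 3)) : cross3 a b 0 = a 1 * b 2 - a 2 * b 1 := by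
  simp [cross3, cross_apply]
lemma BI_c1 (a b : EuclideanSpace ℝ (Fin 3)) : cross3 a b 1 = a 2 * b 0 - a 0 * b 2 := by
  simp [cross3, cross_apply]
lemma BI_c2 (a b : EuclideanSpace ℝ (Fin 3)) : cross3 a b 2 = a 0 * b 1 - a 1 * b 0 := by
  simp [cross3, cross_apply]

/-- Key algebraic identity. -/
lemma BI_key (ξ Q D B : EuclideanSpace ℝ (Fin 3)) :
    ‖D + cross3 B ξ‖^2 + (inner ℝ B ξ : ℝ)^2 + ‖Q - ξ‖^2
      = ‖D‖^2 + (‖B‖^2 + 1) * ‖ξ‖^2 + ‖Q‖^2 + 2 * (inner ℝ ξ (cross3 D B - Q) : ℝ) := by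
  simp only [BI_esq, BI_einner, PiLp.add_apply, PiLp.sub_apply, BI_c0, BI_c1, BI_c2]
  ring

/-- Linearity of the cross product in its first argument for convex combinations. -/
lemma BI_cross_lin (a b : ℝ) (x y ξ : EuclideanSpace ℝ (Fin 3)) :
    cross3 (a • x + b • y) ξ = a • cross3 x ξ + b • cross3 y ξ := by
  unfold cross3
  simp only [WithLp.equiv_apply, WithLp.equiv_symm_apply, WithLp.ofLp_add, WithLp.ofLp_smul, map_add, map_smul,
    LinearMap.add_apply, LinearMap.smul_apply, WithLp.toLp_add, WithLp.toLp_smul]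

lemma BI_minkowski3 (a b x1 y1 z1 x2 y2 z2 : ℝ) (ha : 0 ≤ a) (hb : 0 ≤ b) :
    Real.sqrt ((a*x1+b*x2)^2+(a*y1+b*y2)^2+(a*z1+b*z2)^2)
      ≤ a * Real.sqrt (x1^2+y1^2+z1^2) + b * Real.sqrt (x2^2+y2^2+z2^2) := by
  have norm_eq : ∀ x y z : ℝ,
      ‖((WithLp.equiv 2 (Fin 3 → ℝ)).symm ![x, y, z] : EuclideanSpace ℝ (Fin 3))‖
        = Real.sqrt (x^2+y^2+z^2) := by
    intro x y z
    rw [EuclideanSpace.norm_eq]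
    simp [Fin.sum_univ_three, sq_abs]
  set u : EuclideanSpace ℝ (Fin 3) := (WithLp.equiv 2 (Fin 3 → ℝ)).symm ![x1, y1, z1]
  set v : EuclideanSpace ℝ (Fin 3) := (WithLp.equiv 2 (Fin 3 → ℝ)).symm ![x2, y2, z2]
  have hcomb : ((WithLp.equiv 2 (Fin 3 → ℝ)).symm ![a*x1+b*x2, a*y1+b*y2, a*z1+b*z2]
      : EuclideanSpace ℝ (Fin 3)) = a • u + b • v := by
    ext i
    fin_cases i <;> simp [u, v]
  calc Real.sqrt ((a*x1+b*x2)^2+(a*y1+b*y2)^2+(a*z1+b*z2)^2)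
      = ‖a • u + b • v‖ := by rw [← hcomb, norm_eq]
    _ ≤ ‖a • u‖ + ‖b • v‖ := norm_add_le _ _
    _ = a * ‖u‖ + b * ‖v‖ := by
        rw [norm_smul, norm_smul, Real.norm_of_nonneg ha, Real.norm_of_nonneg hb]
    _ = _ := by rw [norm_eq, norm_eq]

/-- Pointwise upper bound for a unit vector `ξ`. -/
lemma BI_bound (ξ Q D B : EuclideanSpace ℝ (Fin 3)) (hξ : ‖ξ‖ = 1) :
    ‖D + cross3 B ξ‖^2 + (inner ℝ B ξ : ℝ)^2 + ‖Q - ξ‖^2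
      ≤ 1 + ‖D‖^2 + ‖B‖^2 + ‖Q‖^2 + 2 * ‖cross3 D B - Q‖ := by
  rw [BI_key, hξ]
  have hcs : (inner ℝ ξ (cross3 D B - Q) : ℝ) ≤ ‖ξ‖ * ‖cross3 D B - Q‖ :=
    real_inner_le_norm _ _
  rw [hξ] at hcs
  nlinarith

end Aux

set_option maxHeartbeats 1000000 in
/-- Serre's description of the convex hull of the Born–Infeld manifold: the set
`{(h,Q,D,B) : h ≥ √(1 + |D|² + |B|² + |Q|² + 2|D × B - Q|)}` is convex in `ℝ¹⁰`. -/
theorem convexified_BI_manifold_convex :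
    Convex ℝ
      {p : ℝ × EuclideanSpace ℝ (Fin 3) × EuclideanSpace ℝ (Fin 3) ×
          EuclideanSpace ℝ (Fin 3) |
          Real.sqrt (1 + ‖p.2.2.1‖ ^ 2 + ‖p.2.2.2‖ ^ 2 + ‖p.2.1‖ ^ 2 +
            2 * ‖cross3 p.2.2.1 p.2.2.2 - p.2.1‖) ≤ p.1} := by
  rintro ⟨h1, Q1, D1, B1⟩ hp ⟨h2, Q2, D2, B2⟩ hq a b ha hb hab
  simp only [Set.mem_setOf_eq] at hp hq ⊢
  simp only [Prod.smul_mk, Prod.mk_add_mk, smul_eq_mul] at *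
  set Q : EuclideanSpace ℝ (Fin 3) := a • Q1 + b • Q2 with hQdef
  set D : EuclideanSpace ℝ (Fin 3) := a • D1 + b • D2 with hDdef
  set B : EuclideanSpace ℝ (Fin 3) := a • B1 + b • B2 with hBdef
  set w : EuclideanSpace ℝ (Fin 3) := cross3 D B - Q with hwdef
  -- choose a unit vector ξ attaining the supremum
  obtain ⟨ξ, hξ1, hξw⟩ : ∃ ξ : EuclideanSpace ℝ (Fin 3),
      ‖ξ‖ = 1 ∧ (inner ℝ ξ w : ℝ) = ‖w‖ := by
    by_cases hw : w = 0
    · exact ⟨EuclideanSpace.single 0 1, by simp [EuclideanSpace.norm_single],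
        by simp [hw]⟩
    · have hwn : ‖w‖ ≠ 0 := norm_ne_zero_iff.2 hw
      refine ⟨‖w‖⁻¹ • w, ?_, ?_⟩
      · rw [norm_smul, Real.norm_of_nonneg (by positivity)]
        field_simp
      · rw [real_inner_smul_left, real_inner_self_eq_norm_sq, sq]
        field_simp
  clear_value Q D B w
  -- rewrite the LHS using ξ
  have hmain : 1 + ‖D‖^2 + ‖B‖^2 + ‖Q‖^2 + 2 * ‖w‖
      = ‖D + cross3 B ξ‖^2 + (inner ℝ B ξ : ℝ)^2 + ‖Q - ξ‖^2 := by
    rw [BI_key, hξ1, ← hwdef, hξw]; ring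
  rw [hmain]
  -- abbreviations
  set A1 := ‖D1 + cross3 B1 ξ‖ with hA1
  set A2 := ‖D2 + cross3 B2 ξ‖ with hA2
  set C1 : ℝ := inner ℝ B1 ξ with hC1
  set C2 : ℝ := inner ℝ B2 ξ with hC2
  set E1 := ‖Q1 - ξ‖ with hE1
  set E2 := ‖Q2 - ξ‖ with hE2
  clear_value A1 A2 C1 C2 E1 E2
  -- affine decompositions
  have hξ' : a • ξ + b • ξ = ξ := by rw [← add_smul, hab, one_smul]
  have hD : D + cross3 B ξ = a • (D1 + cross3 B1 ξ) + b • (D2 + cross3 B2 ξ) := by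
    rw [hDdef, hBdef, BI_cross_lin, smul_add, smul_add]; abel
  have hQ : Q - ξ = a • (Q1 - ξ) + b • (Q2 - ξ) := by
    calc Q - ξ = a • Q1 + b • Q2 - (a • ξ + b • ξ) := by rw [hQdef, hξ']
      _ = a • (Q1 - ξ) + b • (Q2 - ξ) := by rw [smul_sub, smul_sub]; abel
  have hC : (inner ℝ B ξ : ℝ) = a * C1 + b * C2 := by
    rw [hBdef, inner_add_left, real_inner_smul_left, real_inner_smul_left, hC1, hC2]
  have hA : ‖D + cross3 B ξ‖ ≤ a * A1 + b * A2 := by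
    rw [hD]
    refine (norm_add_le _ _).trans (le_of_eq ?_)
    rw [norm_smul, norm_smul, Real.norm_of_nonneg ha, Real.norm_of_nonneg hb, hA1, hA2]
  have hE : ‖Q - ξ‖ ≤ a * E1 + b * E2 := by
    rw [hQ]
    refine (norm_add_le _ _).trans (le_of_eq ?_)
    rw [norm_smul, norm_smul, Real.norm_of_nonneg ha, Real.norm_of_nonneg hb, hE1, hE2]
  -- squared bounds
  have s1 : ‖D + cross3 B ξ‖^2 ≤ (a * A1 + b * A2)^2 :=
    pow_le_pow_left₀ (norm_nonneg _) hA 2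
  have s2 : (inner ℝ B ξ : ℝ)^2 ≤ (a * |C1| + b * |C2|)^2 := by
    rw [hC]
    have habs : |a * C1 + b * C2| ≤ a * |C1| + b * |C2| := by
      refine (abs_add_le _ _).trans (le_of_eq ?_)
      rw [abs_mul, abs_mul, abs_of_nonneg ha, abs_of_nonneg hb]
    calc (a * C1 + b * C2)^2 = |a * C1 + b * C2|^2 := (sq_abs _).symm
      _ ≤ (a * |C1| + b * |C2|)^2 := pow_le_pow_left₀ (abs_nonneg _) habs 2
  have s3 : ‖Q - ξ‖^2 ≤ (a * E1 + b * E2)^2 :=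
    pow_le_pow_left₀ (norm_nonneg _) hE 2
  -- per-point bounds
  have b1 : Real.sqrt (A1^2 + C1^2 + E1^2) ≤ h1 := by
    rw [hA1, hC1, hE1]
    exact (Real.sqrt_le_sqrt (BI_bound ξ Q1 D1 B1 hξ1)).trans hp
  have b2 : Real.sqrt (A2^2 + C2^2 + E2^2) ≤ h2 := by
    rw [hA2, hC2, hE2]
    exact (Real.sqrt_le_sqrt (BI_bound ξ Q2 D2 B2 hξ1)).trans hq
  calc Real.sqrt (‖D + cross3 B ξ‖^2 + (inner ℝ B ξ : ℝ)^2 + ‖Q - ξ‖^2)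
      ≤ Real.sqrt ((a * A1 + b * A2)^2 + (a * |C1| + b * |C2|)^2
          + (a * E1 + b * E2)^2) := Real.sqrt_le_sqrt (by linarith)
    _ ≤ a * Real.sqrt (A1^2 + |C1|^2 + E1^2)
          + b * Real.sqrt (A2^2 + |C2|^2 + E2^2) :=
        BI_minkowski3 a b A1 (|C1|) E1 A2 (|C2|) E2 ha hb
    _ = a * Real.sqrt (A1^2 + C1^2 + E1^2)
          + b * Real.sqrt (A2^2 + C2^2 + E2^2) := by rw [sq_abs, sq_abs]
    _ ≤ a * h1 + b * h2 := by
        exact add_le_add (mul_le_mul_of_nonneg_left b1 ha)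
          (mul_le_mul_of_nonneg_left b2 hb)
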